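/- The commutator subgroup of the free group F_3 = F(g_1, g_2, g_3) on three generators is a free group, freely generated by the family of iterated commutators (g_3^{n_1}, g_1^{n_2}), (g_3^{n_1}, g_2^{n_2}), (g_2^{n_1}, g_1^{n_2}), (g_1^{n_1}, (g_3^{n_2}, g_2^{n_3})), (g_2^{n_1}, (g_3^{n_2}, g_1^{n_3})), where all exponents n_k range over the nonzero integers. -/

import Mathlib

/-- The commutator `(g, h) = g⁻¹h⁻¹gh` (the convention of the paper). -/
def pcomm {G : Type*} [Group G] (g h : G) : G := g⁻¹ * h⁻¹ * g * h

/-- Nonzero integers. -/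
def NZInt : Type := {n : ℤ // n ≠ 0}

/-- The index set for the basic commutators in `F₃`: three families of commutators of weight
two, indexed by pairs of nonzero integers, and two families of iterated commutators of weight
three, indexed by triples of nonzero integers. -/
def IndexF3 : Type := (Fin 3 × NZInt × NZInt) ⊕ (Fin 2 × NZInt × NZInt × NZInt)

/-- The family of iterated commutators
`(g₃^{n₁}, g₁^{n₂})`, `(g₃^{n₁}, g₂^{n₂})`, `(g₂^{n₁}, g₁^{n₂})`,
`(g₁^{n₁}, (g₃^{n₂}, g₂^{n₃}))`, `(g₂^{n₁}, (g₃^{n₂}, g₁^{n₃}))` in the free group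
`F₃ = F(g₁, g₂, g₃)` (whose generators are indexed by `0, 1, 2`). -/
def basisFamilyF3 : IndexF3 → FreeGroup (Fin 3) := fun x =>
  match x with
  | .inl (v, n₁, n₂) =>
      ![pcomm (FreeGroup.of (2 : Fin 3) ^ n₁.1) (FreeGroup.of (0 : Fin 3) ^ n₂.1),
        pcomm (FreeGroup.of (2 : Fin 3) ^ n₁.1) (FreeGroup.of (1 : Fin 3) ^ n₂.1),
        pcomm (FreeGroup.of (1 : Fin 3) ^ n₁.1) (FreeGroup.of (0 : Fin 3) ^ n₂.1)] v
  | .inr (v, n₁, n₂, n₃) =>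
      ![pcomm (FreeGroup.of (0 : Fin 3) ^ n₁.1)
          (pcomm (FreeGroup.of (2 : Fin 3) ^ n₂.1) (FreeGroup.of (1 : Fin 3) ^ n₃.1)),
        pcomm (FreeGroup.of (1 : Fin 3) ^ n₁.1)
          (pcomm (FreeGroup.of (2 : Fin 3) ^ n₂.1) (FreeGroup.of (0 : Fin 3) ^ n₃.1))] v

namespace CommF3

abbrev F3 := FreeGroup (Fin 3)
abbrev H3 := FreeGroup IndexF3

def xx : F3 := FreeGroup.of 0
def yy : F3 := FreeGroup.of 1
def zz : F3 := FreeGroup.of 2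

def Pw (m n : ℤ) : H3 :=
  if h : m = 0 ∨ n = 0 then 1
  else FreeGroup.of (Sum.inl (0, ⟨m, fun hm => h (Or.inl hm)⟩, ⟨n, fun hn => h (Or.inr hn)⟩))
def Qw (m n : ℤ) : H3 :=
  if h : m = 0 ∨ n = 0 then 1
  else FreeGroup.of (Sum.inl (1, ⟨m, fun hm => h (Or.inl hm)⟩, ⟨n, fun hn => h (Or.inr hn)⟩))
def Rw (m n : ℤ) : H3 :=
  if h : m = 0 ∨ n = 0 then 1
  else FreeGroup.of (Sum.inl (2, ⟨m, fun hm => h (Or.inl hm)⟩, ⟨n, fun hn => h (Or.inr hn)⟩))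
def Sw (m n p : ℤ) : H3 :=
  if h : m = 0 ∨ n = 0 ∨ p = 0 then 1
  else FreeGroup.of (Sum.inr (0, ⟨m, fun hm => h (Or.inl hm)⟩,
    ⟨n, fun hn => h (Or.inr (Or.inl hn))⟩, ⟨p, fun hp => h (Or.inr (Or.inr hp))⟩))
def Tw (m n p : ℤ) : H3 :=
  if h : m = 0 ∨ n = 0 ∨ p = 0 then 1
  else FreeGroup.of (Sum.inr (1, ⟨m, fun hm => h (Or.inl hm)⟩,
    ⟨n, fun hn => h (Or.inr (Or.inl hn))⟩, ⟨p, fun hp => h (Or.inr (Or.inr hp))⟩))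

def L : H3 →* F3 := FreeGroup.lift basisFamilyF3

lemma L_Pw (m n : ℤ) : L (Pw m n) = zz^(-m) * xx^(-n) * zz^m * xx^n := by
  unfold Pw
  split
  · rename_i h
    rcases h with h | h <;> subst h <;> simp [L] <;> group
  · show L (FreeGroup.of _) = _
    refine (FreeGroup.lift_apply_of (f := basisFamilyF3)).trans ?_
    simp only [basisFamilyF3, Matrix.cons_val_zero, pcomm, xx, zz]
    group
lemma L_Qw (m n : ℤ) : L (Qw m n) = zz^(-m) * yy^(-n) * zz^m * yy^n := by
  unfold Qw
  split
  · rename_i h; rcases h with h | h <;> subst h <;> simp [L] <;> group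
  · show L (FreeGroup.of _) = _
    refine (FreeGroup.lift_apply_of (f := basisFamilyF3)).trans ?_
    simp only [basisFamilyF3, Matrix.cons_val_one, Matrix.head_cons, Matrix.cons_val_zero, pcomm, yy, zz]
    group

lemma L_Rw (m n : ℤ) : L (Rw m n) = yy^(-m) * xx^(-n) * yy^m * xx^n := by
  unfold Rw
  split
  · rename_i h; rcases h with h | h <;> subst h <;> simp [L] <;> group
  · show L (FreeGroup.of _) = _
    refine (FreeGroup.lift_apply_of (f := basisFamilyF3)).trans ?_
    simp only [basisFamilyF3, Matrix.cons_val_two, Matrix.tail_cons, Matrix.head_cons, pcomm,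
      xx, yy]
    group

lemma L_Sw (m n p : ℤ) : L (Sw m n p) =
    xx^(-m) * (zz^(-n) * yy^(-p) * zz^n * yy^p)⁻¹ * xx^m
      * (zz^(-n) * yy^(-p) * zz^n * yy^p) := by
  unfold Sw
  split
  · rename_i h; rcases h with h | h | h <;> subst h <;> simp [L] <;> group
  · show L (FreeGroup.of _) = _
    refine (FreeGroup.lift_apply_of (f := basisFamilyF3)).trans ?_
    simp only [basisFamilyF3, Matrix.cons_val_zero, pcomm, xx, yy, zz]
    group

lemma L_Tw (m n p : ℤ) : L (Tw m n p) =
    yy^(-m) * (zz^(-n) * xx^(-p) * zz^n * xx^p)⁻¹ * yy^m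
      * (zz^(-n) * xx^(-p) * zz^n * xx^p) := by
  unfold Tw
  split
  · rename_i h; rcases h with h | h | h <;> subst h <;> simp [L] <;> group
  · show L (FreeGroup.of _) = _
    refine (FreeGroup.lift_apply_of (f := basisFamilyF3)).trans ?_
    simp only [basisFamilyF3, Matrix.cons_val_one, Matrix.head_cons, Matrix.cons_val_zero, pcomm, xx, yy, zz]
    group

@[simp] lemma Pw_zero_left (n : ℤ) : Pw 0 n = 1 := by simp [Pw]
@[simp] lemma Pw_zero_right (m : ℤ) : Pw m 0 = 1 := by simp [Pw]
@[simp] lemma Qw_zero_left (n : ℤ) : Qw 0 n = 1 := by simp [Qw]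
@[simp] lemma Qw_zero_right (m : ℤ) : Qw m 0 = 1 := by simp [Qw]
@[simp] lemma Rw_zero_left (n : ℤ) : Rw 0 n = 1 := by simp [Rw]
@[simp] lemma Rw_zero_right (m : ℤ) : Rw m 0 = 1 := by simp [Rw]
@[simp] lemma Sw_zero₁ (n p : ℤ) : Sw 0 n p = 1 := by simp [Sw]
@[simp] lemma Sw_zero₂ (m p : ℤ) : Sw m 0 p = 1 := by simp [Sw]
@[simp] lemma Sw_zero₃ (m n : ℤ) : Sw m n 0 = 1 := by simp [Sw]
@[simp] lemma Tw_zero₁ (n p : ℤ) : Tw 0 n p = 1 := by simp [Tw]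
@[simp] lemma Tw_zero₂ (m p : ℤ) : Tw m 0 p = 1 := by simp [Tw]
@[simp] lemma Tw_zero₃ (m n : ℤ) : Tw m n 0 = 1 := by simp [Tw]

/-- `E b c a`: the building block for the rewriting of an `x`-edge at position `(a,b,c)`. -/
def Ew (b c a : ℤ) : H3 := (Rw (-b) (-a))⁻¹ * Tw (-b) (-c) (-a) * (Pw (-c) (-a))⁻¹
/-- `Fw a c b`: the building block for the rewriting of a `y`-edge at position `(a,b,c)`. -/
def Fw (a c b : ℤ) : H3 := Sw (-a) (-c) (-b) * (Qw (-c) (-b))⁻¹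

@[simp] lemma Ew_zero (b c : ℤ) : Ew b c 0 = 1 := by simp [Ew]
@[simp] lemma Fw_zero (a c : ℤ) : Fw a c 0 = 1 := by simp [Fw]

lemma L_sigx (a b c : ℤ) : L (Ew b c a * (Ew b c (a+1))⁻¹) =
    xx^a * yy^b * zz^c * xx * zz^(-c) * yy^(-b) * xx^(-(a+1)) := by
  simp only [Ew, map_mul, map_inv, L_Rw, L_Tw, L_Pw]
  group

lemma L_sigy (a b c : ℤ) : L (Fw a c b * (Fw a c (b+1))⁻¹) =
    xx^a * yy^b * zz^c * yy * zz^(-c) * yy^(-(b+1)) * xx^(-a) := by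
  simp only [Fw, map_mul, map_inv, L_Sw, L_Qw]
  group

abbrev V3 := ℤ × ℤ × ℤ

def sigf (v : V3) : Fin 3 → H3 := fun i =>
  match i with
  | 0 => Ew v.2.1 v.2.2 v.1 * (Ew v.2.1 v.2.2 (v.1 + 1))⁻¹
  | 1 => Fw v.1 v.2.2 v.2.1 * (Fw v.1 v.2.2 (v.2.1 + 1))⁻¹
  | 2 => 1

def ev3 : Fin 3 → V3 := ![(1,0,0), (0,1,0), (0,0,1)]

def Bact (i : Fin 3) : Equiv.Perm (V3 × H3) where
  toFun p := (p.1 + ev3 i, p.2 * sigf p.1 i)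
  invFun p := (p.1 - ev3 i, p.2 * (sigf (p.1 - ev3 i) i)⁻¹)
  left_inv p := by simp
  right_inv p := by simp

def Phi : F3 →* Equiv.Perm (V3 × H3) := FreeGroup.lift Bact

def ppv (g : F3) (v : V3) : V3 := (Phi g (v, 1)).1
def dd (g : F3) (v : V3) : H3 := (Phi g (v, 1)).2

lemma Phi_of (i : Fin 3) : Phi (FreeGroup.of i) = Bact i := FreeGroup.lift_apply_of

lemma Bact_apply (i : Fin 3) (v : V3) (h : H3) :
    Bact i (v, h) = (v + ev3 i, h * sigf v i) := rfl

lemma Bact_inv_apply (i : Fin 3) (v : V3) (h : H3) :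
    (Bact i)⁻¹ (v, h) = (v - ev3 i, h * (sigf (v - ev3 i) i)⁻¹) := rfl

lemma pure_eq_of (i : Fin 3) : (pure i : F3) = FreeGroup.of i := rfl

lemma good (g : F3) : ∀ (v : V3) (h : H3), Phi g (v, h) = (ppv g v, h * dd g v) := by
  induction g using FreeGroup.induction_on with
  | C1 => intro v h; simp [ppv, dd]
  | of i =>
      intro v h
      rw [Phi_of, Bact_apply]
      simp [ppv, dd, Phi_of, Bact_apply]
  | inv_of i _ =>
      intro v h
      rw [map_inv, Phi_of, Bact_inv_apply]
      simp [ppv, dd, map_inv, Phi_of, Bact_inv_apply]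
  | mul a b ha hb =>
      intro v h
      have e : Phi (a * b) (v, 1) = (ppv a (ppv b v), (1 * dd b v) * dd a (ppv b v)) := by
        rw [map_mul, Equiv.Perm.mul_apply, hb, ha]
      have e2 : Phi (a * b) (v, h) = (ppv a (ppv b v), (h * dd b v) * dd a (ppv b v)) := by
        rw [map_mul, Equiv.Perm.mul_apply, hb, ha]
      rw [e2]
      show _ = ((Phi (a * b) (v, 1)).1, h * (Phi (a * b) (v, 1)).2)
      rw [e]
      simp [mul_assoc]

lemma Phi_apply (g : F3) (v : V3) : Phi g (v, 1) = (ppv g v, dd g v) := by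
  rw [good g v 1, one_mul]

lemma Phi_mul_apply (a b : F3) (v : V3) :
    Phi (a * b) (v, 1) = (ppv a (ppv b v), dd b v * dd a (ppv b v)) := by
  rw [map_mul, Equiv.Perm.mul_apply, Phi_apply b, good a]

lemma ppv_mul (a b : F3) (v : V3) : ppv (a * b) v = ppv a (ppv b v) := by
  show (Phi (a * b) (v, 1)).1 = ppv a (ppv b v)
  rw [Phi_mul_apply]

lemma dd_mul (a b : F3) (v : V3) : dd (a * b) v = dd b v * dd a (ppv b v) := by
  show (Phi (a * b) (v, 1)).2 = dd b v * dd a (ppv b v)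
  rw [Phi_mul_apply]

@[simp] lemma ppv_one (v : V3) : ppv 1 v = v := by simp [ppv]
@[simp] lemma dd_one (v : V3) : dd 1 v = 1 := by simp [dd]

lemma ppv_of (i : Fin 3) (v : V3) : ppv (FreeGroup.of i) v = v + ev3 i := by
  simp [ppv, Phi_of, Bact_apply]

lemma dd_of (i : Fin 3) (v : V3) : dd (FreeGroup.of i) v = sigf v i := by
  simp [dd, Phi_of, Bact_apply]

lemma ppv_of_inv (i : Fin 3) (v : V3) : ppv (FreeGroup.of i)⁻¹ v = v - ev3 i := by
  simp [ppv, map_inv, Phi_of, Bact_inv_apply]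

lemma dd_of_inv (i : Fin 3) (v : V3) :
    dd (FreeGroup.of i)⁻¹ v = (sigf (v - ev3 i) i)⁻¹ := by
  simp [dd, map_inv, Phi_of, Bact_inv_apply]

lemma sigf_x (a b c : ℤ) : sigf (a,b,c) 0 = Ew b c a * (Ew b c (a + 1))⁻¹ := rfl
lemma sigf_y (a b c : ℤ) : sigf (a,b,c) 1 = Fw a c b * (Fw a c (b + 1))⁻¹ := rfl
lemma sigf_z (v : V3) : sigf v 2 = 1 := rfl

lemma ev3_0 : ev3 0 = (1,0,0) := rfl
lemma ev3_1 : ev3 1 = (0,1,0) := rfl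
lemma ev3_2 : ev3 2 = (0,0,1) := rfl

lemma ppv_x (a b c : ℤ) : ppv xx (a,b,c) = (a+1,b,c) := by
  rw [xx, ppv_of, ev3_0]; simp [Prod.ext_iff]
lemma ppv_y (a b c : ℤ) : ppv yy (a,b,c) = (a,b+1,c) := by
  rw [yy, ppv_of, ev3_1]; simp [Prod.ext_iff]
lemma ppv_z (a b c : ℤ) : ppv zz (a,b,c) = (a,b,c+1) := by
  rw [zz, ppv_of, ev3_2]; simp [Prod.ext_iff]
lemma ppv_x_inv (a b c : ℤ) : ppv xx⁻¹ (a,b,c) = (a-1,b,c) := by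
  rw [xx, ppv_of_inv, ev3_0]; simp [Prod.ext_iff]
lemma ppv_y_inv (a b c : ℤ) : ppv yy⁻¹ (a,b,c) = (a,b-1,c) := by
  rw [yy, ppv_of_inv, ev3_1]; simp [Prod.ext_iff]
lemma ppv_z_inv (a b c : ℤ) : ppv zz⁻¹ (a,b,c) = (a,b,c-1) := by
  rw [zz, ppv_of_inv, ev3_2]; simp [Prod.ext_iff]

lemma dd_x (a b c : ℤ) : dd xx (a,b,c) = Ew b c a * (Ew b c (a+1))⁻¹ := by
  rw [xx, dd_of, sigf_x]
lemma dd_y (a b c : ℤ) : dd yy (a,b,c) = Fw a c b * (Fw a c (b+1))⁻¹ := by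
  rw [yy, dd_of, sigf_y]
lemma dd_z (a b c : ℤ) : dd zz (a,b,c) = 1 := by
  rw [zz, dd_of, sigf_z]
lemma dd_x_inv (a b c : ℤ) : dd xx⁻¹ (a,b,c) = Ew b c a * (Ew b c (a-1))⁻¹ := by
  rw [xx, dd_of_inv]
  have : (a,b,c) - ev3 0 = (a-1,b,c) := by rw [ev3_0]; simp [Prod.ext_iff]
  rw [this, sigf_x]
  have : a - 1 + 1 = a := by ring
  rw [this]
  group
lemma dd_y_inv (a b c : ℤ) : dd yy⁻¹ (a,b,c) = Fw a c b * (Fw a c (b-1))⁻¹ := by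
  rw [yy, dd_of_inv]
  have : (a,b,c) - ev3 1 = (a,b-1,c) := by rw [ev3_1]; simp [Prod.ext_iff]
  rw [this, sigf_y]
  have : b - 1 + 1 = b := by ring
  rw [this]
  group
lemma dd_z_inv (a b c : ℤ) : dd zz⁻¹ (a,b,c) = 1 := by
  rw [zz, dd_of_inv, sigf_z, inv_one]

lemma ppv_x_pow (n a b c : ℤ) : ppv (xx^n) (a,b,c) = (a+n,b,c) := by
  induction n using Int.induction_on generalizing a b c with
  | zero => simp
  | succ n ih =>
      rw [zpow_add_one, ppv_mul, ppv_x, ih]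
      have : a + 1 + (n:ℤ) = a + ((n:ℤ)+1) := by ring
      rw [this]
  | pred n ih =>
      rw [zpow_sub_one, ppv_mul, ppv_x_inv, ih]
      have : a - 1 + (-(n:ℤ)) = a + (-(n:ℤ)-1) := by ring
      rw [this]

lemma ppv_y_pow (n a b c : ℤ) : ppv (yy^n) (a,b,c) = (a,b+n,c) := by
  induction n using Int.induction_on generalizing a b c with
  | zero => simp
  | succ n ih =>
      rw [zpow_add_one, ppv_mul, ppv_y, ih]
      have : b + 1 + (n:ℤ) = b + ((n:ℤ)+1) := by ring
      rw [this]
  | pred n ih =>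
      rw [zpow_sub_one, ppv_mul, ppv_y_inv, ih]
      have : b - 1 + (-(n:ℤ)) = b + (-(n:ℤ)-1) := by ring
      rw [this]

lemma ppv_z_pow (n a b c : ℤ) : ppv (zz^n) (a,b,c) = (a,b,c+n) := by
  induction n using Int.induction_on generalizing a b c with
  | zero => simp
  | succ n ih =>
      rw [zpow_add_one, ppv_mul, ppv_z, ih]
      have : c + 1 + (n:ℤ) = c + ((n:ℤ)+1) := by ring
      rw [this]
  | pred n ih =>
      rw [zpow_sub_one, ppv_mul, ppv_z_inv, ih]
      have : c - 1 + (-(n:ℤ)) = c + (-(n:ℤ)-1) := by ring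
      rw [this]

lemma dd_x_pow (n a b c : ℤ) : dd (xx^n) (a,b,c) = Ew b c a * (Ew b c (a+n))⁻¹ := by
  induction n using Int.induction_on generalizing a b c with
  | zero => simp
  | succ n ih =>
      rw [zpow_add_one, dd_mul, ppv_x, dd_x, ih]
      have : a + 1 + (n:ℤ) = a + ((n:ℤ)+1) := by ring
      rw [this]
      group
  | pred n ih =>
      rw [zpow_sub_one, dd_mul, ppv_x_inv, dd_x_inv, ih]
      have : a - 1 + (-(n:ℤ)) = a + (-(n:ℤ)-1) := by ring
      rw [this]
      group

lemma dd_y_pow (n a b c : ℤ) : dd (yy^n) (a,b,c) = Fw a c b * (Fw a c (b+n))⁻¹ := by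
  induction n using Int.induction_on generalizing a b c with
  | zero => simp
  | succ n ih =>
      rw [zpow_add_one, dd_mul, ppv_y, dd_y, ih]
      have : b + 1 + (n:ℤ) = b + ((n:ℤ)+1) := by ring
      rw [this]
      group
  | pred n ih =>
      rw [zpow_sub_one, dd_mul, ppv_y_inv, dd_y_inv, ih]
      have : b - 1 + (-(n:ℤ)) = b + (-(n:ℤ)-1) := by ring
      rw [this]
      group

lemma dd_z_pow (n a b c : ℤ) : dd (zz^n) (a,b,c) = 1 := by
  induction n using Int.induction_on generalizing a b c with
  | zero => simp
  | succ n ih => rw [zpow_add_one, dd_mul, ppv_z, dd_z, ih]; group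
  | pred n ih => rw [zpow_sub_one, dd_mul, ppv_z_inv, dd_z_inv, ih]; group

lemma Ew_b0 (c a : ℤ) : Ew 0 c a = (Pw (-c) (-a))⁻¹ := by simp [Ew]
lemma Ew_c0 (b a : ℤ) : Ew b 0 a = (Rw (-b) (-a))⁻¹ := by simp [Ew]
@[simp] lemma Ew_00 (a : ℤ) : Ew 0 0 a = 1 := by simp [Ew]
lemma Fw_a0 (c b : ℤ) : Fw 0 c b = (Qw (-c) (-b))⁻¹ := by simp [Fw]
@[simp] lemma Fw_c0 (a b : ℤ) : Fw a 0 b = 1 := by simp [Fw]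
@[simp] lemma Fw_b0 (a c : ℤ) : Fw a c 0 = 1 := by simp [Fw]
@[simp] lemma Ew_a0 (b c : ℤ) : Ew b c 0 = 1 := by simp [Ew]

lemma ppv_inv_cancel (a : F3) (v : V3) : ppv a (ppv a⁻¹ v) = v := by
  rw [← ppv_mul, mul_inv_cancel, ppv_one]

lemma dd_inv_eq (a : F3) (v : V3) : dd a⁻¹ v = (dd a (ppv a⁻¹ v))⁻¹ := by
  have h := dd_mul a a⁻¹ v
  rw [mul_inv_cancel, dd_one] at h
  exact eq_inv_of_mul_eq_one_left h.symm

def Pword (n p : ℤ) : F3 := zz^(-n) * xx^(-p) * zz^n * xx^p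
def Qword (n p : ℤ) : F3 := zz^(-n) * yy^(-p) * zz^n * yy^p
def Rword (n p : ℤ) : F3 := yy^(-n) * xx^(-p) * yy^n * xx^p
def Sword (m n p : ℤ) : F3 := xx^(-m) * (Qword n p)⁻¹ * xx^m * Qword n p
def Tword (m n p : ℤ) : F3 := yy^(-m) * (Pword n p)⁻¹ * yy^m * Pword n p

lemma ppv_Pword (n p a b c : ℤ) : ppv (Pword n p) (a,b,c) = (a,b,c) := by
  rw [Pword, ppv_mul, ppv_mul, ppv_mul, ppv_x_pow, ppv_z_pow, ppv_x_pow, ppv_z_pow]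
  simp [Prod.ext_iff]

lemma ppv_Qword (n p a b c : ℤ) : ppv (Qword n p) (a,b,c) = (a,b,c) := by
  rw [Qword, ppv_mul, ppv_mul, ppv_mul, ppv_y_pow, ppv_z_pow, ppv_y_pow, ppv_z_pow]
  simp [Prod.ext_iff]

lemma ppv_Rword (n p a b c : ℤ) : ppv (Rword n p) (a,b,c) = (a,b,c) := by
  rw [Rword, ppv_mul, ppv_mul, ppv_mul, ppv_x_pow, ppv_y_pow, ppv_x_pow, ppv_y_pow]
  simp [Prod.ext_iff]

lemma ppv_Qword' (n p : ℤ) (v : V3) : ppv (Qword n p) v = v := by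
  obtain ⟨a, b, c⟩ := v; exact ppv_Qword n p a b c

lemma ppv_Pword' (n p : ℤ) (v : V3) : ppv (Pword n p) v = v := by
  obtain ⟨a, b, c⟩ := v; exact ppv_Pword n p a b c

lemma ppv_Qword_inv (n p : ℤ) (v : V3) : ppv (Qword n p)⁻¹ v = v := by
  have h := ppv_inv_cancel (Qword n p) v
  rwa [ppv_Qword'] at h

lemma ppv_Pword_inv (n p : ℤ) (v : V3) : ppv (Pword n p)⁻¹ v = v := by
  have h := ppv_inv_cancel (Pword n p) v
  rwa [ppv_Pword'] at h

lemma ppv_Sword (m n p a b c : ℤ) : ppv (Sword m n p) (a,b,c) = (a,b,c) := by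
  rw [Sword, ppv_mul, ppv_mul, ppv_mul, ppv_Qword, ppv_x_pow, ppv_Qword_inv, ppv_x_pow]
  simp [Prod.ext_iff]

lemma ppv_Tword (m n p a b c : ℤ) : ppv (Tword m n p) (a,b,c) = (a,b,c) := by
  rw [Tword, ppv_mul, ppv_mul, ppv_mul, ppv_Pword, ppv_y_pow, ppv_Pword_inv, ppv_y_pow]
  simp [Prod.ext_iff]

lemma dd_Pword (n p a b c : ℤ) : dd (Pword n p) (a,b,c) =
    Ew b c a * (Ew b c (a+p))⁻¹ * (Ew b (c+n) (a+p) * (Ew b (c+n) a)⁻¹) := by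
  rw [Pword, dd_mul, dd_mul, dd_mul, ppv_x_pow, ppv_z_pow, ppv_x_pow,
    dd_x_pow, dd_z_pow, dd_x_pow, dd_z_pow]
  have e1 : a + p + -p = a := by ring
  rw [e1]
  group

lemma dd_Qword (n p a b c : ℤ) : dd (Qword n p) (a,b,c) =
    Fw a c b * (Fw a c (b+p))⁻¹ * (Fw a (c+n) (b+p) * (Fw a (c+n) b)⁻¹) := by
  rw [Qword, dd_mul, dd_mul, dd_mul, ppv_y_pow, ppv_z_pow, ppv_y_pow,
    dd_y_pow, dd_z_pow, dd_y_pow, dd_z_pow]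
  have e1 : b + p + -p = b := by ring
  rw [e1]
  group

lemma dd_Rword (n p a b c : ℤ) : dd (Rword n p) (a,b,c) =
    Ew b c a * (Ew b c (a+p))⁻¹ * (Fw (a+p) c b * (Fw (a+p) c (b+n))⁻¹)
      * (Ew (b+n) c (a+p) * (Ew (b+n) c a)⁻¹) * (Fw a c (b+n) * (Fw a c b)⁻¹) := by
  rw [Rword, dd_mul, dd_mul, dd_mul, ppv_x_pow, ppv_y_pow, ppv_x_pow,
    dd_x_pow, dd_y_pow, dd_x_pow, dd_y_pow]
  have e1 : a + p + -p = a := by ring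
  have e2 : b + n + -n = b := by ring
  rw [e1, e2]
  group

lemma ddP (m n : ℤ) : dd (Pword m n) (0,0,0) = (Pw (-m) (-n))⁻¹ := by
  rw [dd_Pword]
  simp [Ew_b0]

lemma ddQ (m n : ℤ) : dd (Qword m n) (0,0,0) = (Qw (-m) (-n))⁻¹ := by
  rw [dd_Qword]
  simp [Fw_a0]

lemma ddR (m n : ℤ) : dd (Rword m n) (0,0,0) = (Rw (-m) (-n))⁻¹ := by
  rw [dd_Rword]
  simp [Ew_c0]

lemma ddS (m n p : ℤ) : dd (Sword m n p) (0,0,0) = (Sw (-m) (-n) (-p))⁻¹ := by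
  rw [Sword, dd_mul, dd_mul, dd_mul, ppv_Qword, ppv_x_pow, ppv_Qword_inv,
    dd_Qword, dd_x_pow, dd_inv_eq, ppv_Qword_inv, dd_Qword, dd_x_pow]
  simp only [Fw, neg_zero, neg_neg, zero_add, add_zero, neg_add_cancel, add_neg_cancel,
    Sw_zero₁, Sw_zero₂, Sw_zero₃, Qw_zero_left, Qw_zero_right, Ew_00, Fw_b0, Fw_c0,
    one_mul, mul_one, inv_one]
  group

lemma ddT (m n p : ℤ) : dd (Tword m n p) (0,0,0) = (Tw (-m) (-n) (-p))⁻¹ := by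
  rw [Tword, dd_mul, dd_mul, dd_mul, ppv_Pword, ppv_y_pow, ppv_Pword_inv,
    dd_Pword, dd_y_pow, dd_inv_eq, ppv_Pword_inv, dd_Pword, dd_y_pow]
  simp only [Ew, Fw, neg_zero, neg_neg, zero_add, add_zero, neg_add_cancel, add_neg_cancel,
    Sw_zero₁, Sw_zero₂, Sw_zero₃, Qw_zero_left, Qw_zero_right, Rw_zero_left, Rw_zero_right,
    Pw_zero_left, Pw_zero_right, Tw_zero₁, Tw_zero₂, Tw_zero₃,
    one_mul, mul_one, inv_one]
  group

def negNZ (n : NZInt) : NZInt := ⟨-n.1, neg_ne_zero.mpr n.2⟩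

def negIdx : IndexF3 → IndexF3
  | .inl (i, m, n) => .inl (i, negNZ m, negNZ n)
  | .inr (i, m, n, p) => .inr (i, negNZ m, negNZ n, negNZ p)

lemma negNZ_negNZ (n : NZInt) : negNZ (negNZ n) = n := Subtype.ext (neg_neg n.1)

lemma negIdx_negIdx (w : IndexF3) : negIdx (negIdx w) = w := by
  cases w with
  | inl t => obtain ⟨i, m, n⟩ := t; simp [negIdx, negNZ_negNZ]; rfl
  | inr t => obtain ⟨i, m, n, p⟩ := t; simp [negIdx, negNZ_negNZ]; rfl

lemma pure_eq_of' (i : IndexF3) : (pure i : H3) = FreeGroup.of i := rfl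

def Psi : H3 →* H3 := FreeGroup.lift (fun w => FreeGroup.of (negIdx w))

lemma Psi_Psi (w : H3) : Psi (Psi w) = w := by
  have h : Psi.comp Psi = MonoidHom.id H3 := by
    apply FreeGroup.ext_hom
    intro a
    simp [Psi, negIdx_negIdx]
  calc Psi (Psi w) = Psi.comp Psi w := rfl
    _ = w := by rw [h]; rfl

lemma Pw_eq (m n : NZInt) : Pw m.1 n.1 = FreeGroup.of (Sum.inl (0, m, n)) := by
  rw [Pw, dif_neg (by push_neg; exact ⟨m.2, n.2⟩)]
  rfl
lemma Qw_eq (m n : NZInt) : Qw m.1 n.1 = FreeGroup.of (Sum.inl (1, m, n)) := by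
  rw [Qw, dif_neg (by push_neg; exact ⟨m.2, n.2⟩)]
  rfl
lemma Rw_eq (m n : NZInt) : Rw m.1 n.1 = FreeGroup.of (Sum.inl (2, m, n)) := by
  rw [Rw, dif_neg (by push_neg; exact ⟨m.2, n.2⟩)]
  rfl
lemma Sw_eq (m n p : NZInt) : Sw m.1 n.1 p.1 = FreeGroup.of (Sum.inr (0, m, n, p)) := by
  rw [Sw, dif_neg (by push_neg; exact ⟨m.2, n.2, p.2⟩)]
  rfl
lemma Tw_eq (m n p : NZInt) : Tw m.1 n.1 p.1 = FreeGroup.of (Sum.inr (1, m, n, p)) := by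
  rw [Tw, dif_neg (by push_neg; exact ⟨m.2, n.2, p.2⟩)]
  rfl

lemma basis_inl0 (m n : NZInt) :
    basisFamilyF3 (Sum.inl (0, m, n)) = Pword m.1 n.1 := by
  simp only [basisFamilyF3, Matrix.cons_val_zero, pcomm, Pword, xx, zz, zpow_neg]
lemma basis_inl1 (m n : NZInt) :
    basisFamilyF3 (Sum.inl (1, m, n)) = Qword m.1 n.1 := by
  simp only [basisFamilyF3, Matrix.cons_val_one, Matrix.head_cons, Matrix.cons_val_zero, pcomm, Qword, yy, zz, zpow_neg]
lemma basis_inl2 (m n : NZInt) :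
    basisFamilyF3 (Sum.inl (2, m, n)) = Rword m.1 n.1 := by
  simp only [basisFamilyF3, Matrix.cons_val_two, Matrix.tail_cons, Matrix.head_cons, pcomm,
    Rword, xx, yy, zpow_neg]
lemma basis_inr0 (m n p : NZInt) :
    basisFamilyF3 (Sum.inr (0, m, n, p)) = Sword m.1 n.1 p.1 := by
  simp only [basisFamilyF3, Matrix.cons_val_zero, pcomm, Sword, Qword, xx, yy, zz, zpow_neg]
lemma basis_inr1 (m n p : NZInt) :
    basisFamilyF3 (Sum.inr (1, m, n, p)) = Tword m.1 n.1 p.1 := by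
  simp only [basisFamilyF3, Matrix.cons_val_one, Matrix.head_cons, Matrix.cons_val_zero, pcomm, Tword, Pword,
    xx, yy, zz, zpow_neg]

lemma dd_basis0 (m n : NZInt) :
    dd (basisFamilyF3 (Sum.inl (0, m, n))) (0,0,0)
      = (FreeGroup.of (negIdx (Sum.inl (0, m, n))))⁻¹ := by
  rw [basis_inl0, ddP, negIdx]
  have : Pw (-m.1) (-n.1) = Pw (negNZ m).1 (negNZ n).1 := rfl
  rw [this, Pw_eq]; rfl
lemma dd_basis1 (m n : NZInt) :
    dd (basisFamilyF3 (Sum.inl (1, m, n))) (0,0,0)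
      = (FreeGroup.of (negIdx (Sum.inl (1, m, n))))⁻¹ := by
  rw [basis_inl1, ddQ, negIdx]
  have : Qw (-m.1) (-n.1) = Qw (negNZ m).1 (negNZ n).1 := rfl
  rw [this, Qw_eq]; rfl
lemma dd_basis2 (m n : NZInt) :
    dd (basisFamilyF3 (Sum.inl (2, m, n))) (0,0,0)
      = (FreeGroup.of (negIdx (Sum.inl (2, m, n))))⁻¹ := by
  rw [basis_inl2, ddR, negIdx]
  have : Rw (-m.1) (-n.1) = Rw (negNZ m).1 (negNZ n).1 := rfl
  rw [this, Rw_eq]; rfl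
lemma dd_basis3 (m n p : NZInt) :
    dd (basisFamilyF3 (Sum.inr (0, m, n, p))) (0,0,0)
      = (FreeGroup.of (negIdx (Sum.inr (0, m, n, p))))⁻¹ := by
  rw [basis_inr0, ddS, negIdx]
  have : Sw (-m.1) (-n.1) (-p.1) = Sw (negNZ m).1 (negNZ n).1 (negNZ p).1 := rfl
  rw [this, Sw_eq]; rfl
lemma dd_basis4 (m n p : NZInt) :
    dd (basisFamilyF3 (Sum.inr (1, m, n, p))) (0,0,0)
      = (FreeGroup.of (negIdx (Sum.inr (1, m, n, p))))⁻¹ := by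
  rw [basis_inr1, ddT, negIdx]
  have : Tw (-m.1) (-n.1) (-p.1) = Tw (negNZ m).1 (negNZ n).1 (negNZ p).1 := rfl
  rw [this, Tw_eq]; rfl

lemma dd_basis (w : IndexF3) :
    dd (basisFamilyF3 w) (0,0,0) = (FreeGroup.of (negIdx w))⁻¹ := by
  cases w with
  | inl t =>
      obtain ⟨i, m, n⟩ := t
      fin_cases i
      · exact dd_basis0 m n
      · exact dd_basis1 m n
      · exact dd_basis2 m n
  | inr t =>
      obtain ⟨i, m, n, p⟩ := t
      fin_cases i
      · exact dd_basis3 m n p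
      · exact dd_basis4 m n p

lemma ppv_Rword' (n p : ℤ) (v : V3) : ppv (Rword n p) v = v := by
  obtain ⟨a, b, c⟩ := v; exact ppv_Rword n p a b c
lemma ppv_Sword' (m n p : ℤ) (v : V3) : ppv (Sword m n p) v = v := by
  obtain ⟨a, b, c⟩ := v; exact ppv_Sword m n p a b c
lemma ppv_Tword' (m n p : ℤ) (v : V3) : ppv (Tword m n p) v = v := by
  obtain ⟨a, b, c⟩ := v; exact ppv_Tword m n p a b c

lemma ppv_basis (w : IndexF3) (v : V3) : ppv (basisFamilyF3 w) v = v := by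
  cases w with
  | inl t =>
      obtain ⟨i, m, n⟩ := t
      fin_cases i
      · exact (basis_inl0 m n ▸ ppv_Pword' m.1 n.1 v :)
      · exact (basis_inl1 m n ▸ ppv_Qword' m.1 n.1 v :)
      · exact (basis_inl2 m n ▸ ppv_Rword' m.1 n.1 v :)
  | inr t =>
      obtain ⟨i, m, n, p⟩ := t
      fin_cases i
      · exact (basis_inr0 m n p ▸ ppv_Sword' m.1 n.1 p.1 v :)
      · exact (basis_inr1 m n p ▸ ppv_Tword' m.1 n.1 p.1 v :)

lemma ppv_L (w : H3) (v : V3) : ppv (FreeGroup.lift basisFamilyF3 w) v = v := by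
  induction w using FreeGroup.induction_on generalizing v with
  | C1 => rw [map_one, ppv_one]
  | of i => rw [FreeGroup.lift_apply_of]; exact ppv_basis i v
  | inv_of i ih =>
      rw [map_inv]
      have h := ppv_inv_cancel (FreeGroup.lift basisFamilyF3 (FreeGroup.of i)) v
      rwa [ih] at h
  | mul a b ha hb => rw [map_mul, ppv_mul, hb, ha]

lemma dd_L (w : H3) :
    dd (FreeGroup.lift basisFamilyF3 w) (0,0,0) = (Psi w)⁻¹ := by
  induction w using FreeGroup.induction_on with
  | C1 => rw [map_one, dd_one, map_one, inv_one]
  | of i =>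
      rw [FreeGroup.lift_apply_of]
      have : Psi (FreeGroup.of i) = FreeGroup.of (negIdx i) := FreeGroup.lift_apply_of
      rw [this]
      exact dd_basis i
  | inv_of i ih =>
      rw [map_inv, dd_inv_eq]
      have h2 : ppv (FreeGroup.lift basisFamilyF3 (FreeGroup.of i))⁻¹ (0,0,0) = (0,0,0) := by
        rw [← map_inv]; exact ppv_L _ _
      rw [h2, ih, map_inv, inv_inv]
  | mul a b ha hb =>
      rw [map_mul, dd_mul, ppv_L, hb, ha, map_mul, mul_inv_rev]

lemma injective_L : Function.Injective (FreeGroup.lift basisFamilyF3 : H3 →* F3) := by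
  intro u v h
  have h2 : (Psi u)⁻¹ = (Psi v)⁻¹ := by rw [← dd_L, ← dd_L, h]
  have h3 : Psi u = Psi v := inv_injective h2
  calc u = Psi (Psi u) := (Psi_Psi u).symm
    _ = Psi (Psi v) := by rw [h3]
    _ = v := Psi_Psi v

def iota : F3 →* F3 := FreeGroup.lift (fun i => (FreeGroup.of i)⁻¹)

lemma iota_of (i : Fin 3) : iota (FreeGroup.of i) = (FreeGroup.of i)⁻¹ := FreeGroup.lift_apply_of

lemma iota_iota (g : F3) : iota (iota g) = g := by
  have h : iota.comp iota = MonoidHom.id F3 := by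
    apply FreeGroup.ext_hom; intro a; simp [iota]
  calc iota (iota g) = iota.comp iota g := rfl
    _ = g := by rw [h]; rfl

def rr (v : V3) : F3 := xx^v.1 * yy^v.2.1 * zz^v.2.2

lemma rr_mk (a b c : ℤ) : rr (a,b,c) = xx^a * yy^b * zz^c := rfl

lemma key2x (a b c : ℤ) : L (dd xx (a,b,c))
    = rr (a,b,c) * (iota xx)⁻¹ * (rr (ppv xx (a,b,c)))⁻¹ := by
  have hi : iota xx = xx⁻¹ := iota_of 0
  rw [ppv_x, dd_x, hi, inv_inv, L_sigx, rr_mk, rr_mk]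
  group

lemma key2y (a b c : ℤ) : L (dd yy (a,b,c))
    = rr (a,b,c) * (iota yy)⁻¹ * (rr (ppv yy (a,b,c)))⁻¹ := by
  have hi : iota yy = yy⁻¹ := iota_of 1
  rw [ppv_y, dd_y, hi, inv_inv, L_sigy, rr_mk, rr_mk]
  group

lemma key2z (a b c : ℤ) : L (dd zz (a,b,c))
    = rr (a,b,c) * (iota zz)⁻¹ * (rr (ppv zz (a,b,c)))⁻¹ := by
  have hi : iota zz = zz⁻¹ := iota_of 2
  rw [ppv_z, dd_z, hi, inv_inv, map_one, rr_mk, rr_mk]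
  group

lemma key2 (g : F3) : ∀ v : V3, L (dd g v) = rr v * (iota g)⁻¹ * (rr (ppv g v))⁻¹ := by
  induction g using FreeGroup.induction_on with
  | C1 =>
      intro v
      rw [dd_one, map_one, map_one, ppv_one]
      group
  | of i =>
      intro v
      obtain ⟨a, b, c⟩ := v
      fin_cases i
      · exact key2x a b c
      · exact key2y a b c
      · exact key2z a b c
  | inv_of i ih =>
      intro v
      rw [dd_inv_eq, map_inv, ih (ppv (FreeGroup.of i)⁻¹ v), ppv_inv_cancel, map_inv]
      group
  | mul a b ha hb =>
      intro v
      rw [dd_mul, map_mul, hb v, ha (ppv b v), ppv_mul, map_mul]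
      group

def Qh : F3 →* Multiplicative V3 := FreeGroup.lift (fun i => Multiplicative.ofAdd (ev3 i))

lemma ppv_eq_add (g : F3) : ∀ v : V3, ppv g v = v + (Qh g).toAdd := by
  induction g using FreeGroup.induction_on with
  | C1 => intro v; simp
  | of i =>
      intro v
      rw [ppv_of]
      have : Qh (FreeGroup.of i) = Multiplicative.ofAdd (ev3 i) := FreeGroup.lift_apply_of
      rw [this]
      rfl
  | inv_of i ih =>
      intro v
      have h := ppv_inv_cancel (FreeGroup.of i) v
      rw [ih] at h
      have h2 : ppv (FreeGroup.of i)⁻¹ v = v - (Qh (FreeGroup.of i)).toAdd := by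
        have := congrArg (fun u => u - (Qh (FreeGroup.of i)).toAdd) h
        simpa using this
      rw [h2, map_inv]
      simp [sub_eq_add_neg]
  | mul a b ha hb =>
      intro v
      rw [ppv_mul, hb, ha, map_mul]
      simp only [toAdd_mul]
      abel

lemma rr_zero : rr (0,0,0) = 1 := by rw [rr_mk]; group

lemma ppv_commutator_zero {g : F3} (hg : g ∈ commutator F3) : ppv g (0,0,0) = (0,0,0) := by
  have h1 : Qh g = 1 := Abelianization.commutator_subset_ker Qh hg
  rw [ppv_eq_add, h1]
  simp

lemma inv_iota_mem_range {g : F3} (hg : g ∈ commutator F3) :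
    (iota g)⁻¹ ∈ (FreeGroup.lift basisFamilyF3 : H3 →* F3).range := by
  have h := key2 g (0,0,0)
  rw [ppv_commutator_zero hg, rr_zero] at h
  refine ⟨dd g (0,0,0), ?_⟩
  rw [show (FreeGroup.lift basisFamilyF3 : H3 →* F3) = L from rfl, h]
  group

lemma iota_mem_commutator {g : F3} (hg : g ∈ commutator F3) : iota g ∈ commutator F3 := by
  have h : Subgroup.map iota (commutator F3) ≤ commutator F3 := by
    rw [commutator_def, Subgroup.map_commutator]
    exact Subgroup.commutator_mono le_top le_top
  exact h ⟨g, hg, rfl⟩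

open scoped commutatorElement in
lemma pcomm_mem (g h : F3) : pcomm g h ∈ commutator F3 := by
  have e : pcomm g h = ⁅g⁻¹, h⁻¹⁆ := by
    rw [commutatorElement_def, pcomm]
    group
  rw [e, commutator_def]
  exact Subgroup.commutator_mem_commutator (Subgroup.mem_top _) (Subgroup.mem_top _)

lemma basis_mem (w : IndexF3) : basisFamilyF3 w ∈ commutator F3 := by
  cases w with
  | inl t =>
      obtain ⟨i, m, n⟩ := t
      fin_cases i
      · exact pcomm_mem _ _
      · exact pcomm_mem _ _
      · exact pcomm_mem _ _
  | inr t =>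
      obtain ⟨i, m, n, p⟩ := t
      fin_cases i
      · exact pcomm_mem _ _
      · exact pcomm_mem _ _

lemma range_eq : (FreeGroup.lift basisFamilyF3 : H3 →* F3).range = commutator F3 := by
  apply le_antisymm
  · rw [FreeGroup.range_lift_eq_closure]
    rw [Subgroup.closure_le]
    rintro g ⟨w, rfl⟩
    exact basis_mem w
  · intro g hg
    have h1 : (iota g)⁻¹ ∈ commutator F3 :=
      (commutator F3).inv_mem (iota_mem_commutator hg)
    have h2 := inv_iota_mem_range h1
    rwa [map_inv, inv_inv, iota_iota] at h2

end CommF3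

/-- The commutator subgroup of the free group `F₃ = F(g₁, g₂, g₃)` is freely generated by the
iterated commutators `(g₃^{n₁}, g₁^{n₂})`, `(g₃^{n₁}, g₂^{n₂})`, `(g₂^{n₁}, g₁^{n₂})`,
`(g₁^{n₁}, (g₃^{n₂}, g₂^{n₃}))`, `(g₂^{n₁}, (g₃^{n₂}, g₁^{n₃}))` with all exponents nonzero:
the homomorphism from the free group on this index set to `F₃`, sending each index to the
corresponding commutator, is injective and has image the commutator subgroup. -/
theorem commutator_subgroup_F3_free_basis :
    Function.Injective (FreeGroup.lift basisFamilyF3) ∧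
      (FreeGroup.lift basisFamilyF3).range = commutator (FreeGroup (Fin 3)) := by
  exact ⟨CommF3.injective_L, CommF3.range_eq⟩
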